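/- Let v_1, …, v_m be vectors in the Euclidean space ℝ^d and let ε ≥ 0. Then the supremum over all r ∈ ℝ^d with ‖r‖₂ ≤ ε of ∑_{j=1}^m max(0, ⟨r, v_j⟩) equals ε times the maximum over b ∈ {0,1}^m of ‖∑_{j=1}^m b_j v_j‖₂. -/

import Mathlib

open scoped RealInnerProductSpace BigOperators

/-- The worst-case total positive perturbation of `m` linear scores under an
`ℓ₂`-bounded input perturbation of size `ε` equals `ε` times the combinatorial
maximum over subsets of labels of the Euclidean norm of the summed vectors. -/
theorem sup_sum_posPart_inner_ball_eq_max_subset_sum_norm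
    {d m : ℕ} (v : Fin m → EuclideanSpace ℝ (Fin d)) (ε : ℝ) (hε : 0 ≤ ε) :
    (⨆ r : {r : EuclideanSpace ℝ (Fin d) // ‖r‖ ≤ ε},
        ∑ j, max 0 ⟪(r : EuclideanSpace ℝ (Fin d)), v j⟫) =
      ε * ⨆ b : Fin m → Bool, ‖∑ j, if b j then v j else 0‖ := by
  classical
  set M := (⨆ b : Fin m → Bool, ‖∑ j, if b j then v j else 0‖) with hM
  have hbddM : BddAbove (Set.range fun b : Fin m → Bool => ‖∑ j, if b j then v j else 0‖) :=
    Set.Finite.bddAbove (Set.finite_range _)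
  have key : ∀ r : EuclideanSpace ℝ (Fin d), ‖r‖ ≤ ε →
      ∑ j, max 0 ⟪r, v j⟫ ≤ ε * M := by
    intro r hr
    set b : Fin m → Bool := fun j => decide (0 < ⟪r, v j⟫) with hb
    have h1 : ∀ j, max 0 ⟪r, v j⟫ = ⟪r, if b j then v j else 0⟫ := by
      intro j
      by_cases h : 0 < ⟪r, v j⟫
      · have hbj : b j = true := decide_eq_true h
        rw [hbj, if_pos rfl, max_eq_right h.le]
      · have hbj : b j = false := decide_eq_false h
        rw [hbj, if_neg Bool.false_ne_true, inner_zero_right, max_eq_left (not_lt.mp h)]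
    calc ∑ j, max 0 ⟪r, v j⟫ = ⟪r, ∑ j, if b j then v j else 0⟫ := by
          rw [inner_sum]; exact Finset.sum_congr rfl fun j _ => h1 j
      _ ≤ ‖r‖ * ‖∑ j, if b j then v j else 0‖ := real_inner_le_norm _ _
      _ ≤ ε * M :=
          mul_le_mul hr (le_ciSup hbddM b) (norm_nonneg _) hε
  have hLbdd : BddAbove (Set.range fun r : {r : EuclideanSpace ℝ (Fin d) // ‖r‖ ≤ ε} =>
      ∑ j, max 0 ⟪(r : EuclideanSpace ℝ (Fin d)), v j⟫) := by
    refine ⟨ε * M, ?_⟩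
    rintro x ⟨r, rfl⟩
    exact key r r.2
  have hne : Nonempty {r : EuclideanSpace ℝ (Fin d) // ‖r‖ ≤ ε} := ⟨⟨0, by simpa using hε⟩⟩
  apply le_antisymm
  · exact ciSup_le fun r => key r r.2
  · obtain ⟨b₀, hb₀⟩ := Finite.exists_max fun b : Fin m → Bool => ‖∑ j, if b j then v j else 0‖
    have hM0 : M = ‖∑ j, if b₀ j then v j else 0‖ :=
      le_antisymm (ciSup_le hb₀) (le_ciSup hbddM b₀)
    set s := ∑ j, if b₀ j then v j else 0 with hs
    by_cases hs0 : s = 0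
    · rw [hM0, hs0]
      have h0 : (0:ℝ) ≤ ⨆ r : {r : EuclideanSpace ℝ (Fin d) // ‖r‖ ≤ ε},
          ∑ j, max 0 ⟪(r : EuclideanSpace ℝ (Fin d)), v j⟫ := by
        have := le_ciSup hLbdd (⟨0, by simpa using hε⟩ : {r : EuclideanSpace ℝ (Fin d) // ‖r‖ ≤ ε})
        simpa using this
      simpa using h0
    · have hns : (0:ℝ) < ‖s‖ := norm_pos_iff.mpr hs0
      set r : EuclideanSpace ℝ (Fin d) := (ε / ‖s‖) • s with hr
      have hrnorm : ‖r‖ ≤ ε := by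
        rw [hr, norm_smul]
        rw [Real.norm_eq_abs, abs_of_nonneg (div_nonneg hε hns.le)]
        rw [div_mul_cancel₀ _ hns.ne']
      have h2 : ε * M = ⟪r, s⟫ := by
        rw [hr, real_inner_smul_left, real_inner_self_eq_norm_mul_norm, hM0]
        field_simp
      rw [h2]
      have h3 : ⟪r, s⟫ ≤ ∑ j, max 0 ⟪r, v j⟫ := by
        rw [hs, inner_sum]
        refine Finset.sum_le_sum fun j _ => ?_
        by_cases h : b₀ j
        · simp only [h, if_true]; exact le_max_right _ _
        · simp [h]
      exact h3.trans (le_ciSup hLbdd (⟨r, hrnorm⟩ : {r : EuclideanSpace ℝ (Fin d) // ‖r‖ ≤ ε}))
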